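/- Let F = x_1⋯x_n · y^u · z^t · (x^a y^α + x^b z^β) in K[x_1,...,x_n,y,z] with a,b ∈ ℕ^n, min(a_i,b_i)=0 for all i, α,β > 0, u,t ∈ {0,1}, and F reduced. Then F is a free divisor. -/

import Mathlib

open MvPolynomial

section Stmt14Aux

variable {K : Type*} [CommSemiring K] {n : ℕ}

/-- product of x-variable powers -/
noncomputable def PPx (K : Type*) [CommSemiring K] {n : ℕ} (f : Fin n → ℕ) :
    MvPolynomial (Fin n ⊕ Fin 2) K :=
  ∏ j : Fin n, X (Sum.inl j) ^ f j

lemma pd_pow_ne {σ : Type*} [DecidableEq σ] {i j : σ} (h : j ≠ i) (m : ℕ) :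
    pderiv i ((X j : MvPolynomial σ K) ^ m) = 0 := by
  rw [pderiv_pow, pderiv_X_of_ne h, mul_zero]

lemma X_mul_pd_pow {σ : Type*} [DecidableEq σ] (i : σ) (m : ℕ) :
    X i * pderiv i ((X i : MvPolynomial σ K) ^ m) = C (m : K) * X i ^ m := by
  cases m with
  | zero => simp
  | succ m =>
    rw [pderiv_pow, pderiv_X_self, mul_one, ← C_eq_coe_nat]
    push_cast
    ring

lemma X_mul_pd_mul {σ : Type*} [DecidableEq σ] (i : σ) (m : ℕ)
    (W : MvPolynomial σ K) (hW : pderiv i W = 0) :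
    X i * pderiv i (X i ^ m * W) = C (m : K) * (X i ^ m * W) := by
  rw [pderiv_mul, hW, mul_zero, add_zero, ← mul_assoc, X_mul_pd_pow, mul_assoc]

lemma pd_PPx_s_zero (s : Finset (Fin n)) (f : Fin n → ℕ) (v : Fin n ⊕ Fin 2)
    (hv : ∀ j ∈ s, v ≠ Sum.inl j) :
    pderiv v (∏ j ∈ s, (X (Sum.inl j) : MvPolynomial (Fin n ⊕ Fin 2) K) ^ f j) = 0 := by
  induction s using Finset.induction_on with
  | empty => simp
  | @insert i s hi ih =>
    rw [Finset.prod_insert hi, pderiv_mul,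
      ih (fun j hj => hv j (Finset.mem_insert_of_mem hj)),
      pd_pow_ne (fun h => hv i (Finset.mem_insert_self i s) h.symm), zero_mul, mul_zero,
      add_zero]

lemma pd_PPx_inr (f : Fin n → ℕ) (k : Fin 2) :
    pderiv (Sum.inr k) (PPx K f) = 0 :=
  pd_PPx_s_zero _ _ _ (fun j _ h => by simp at h)

lemma X_mul_pd_PPx_mul (f : Fin n → ℕ) (i0 : Fin n)
    (W : MvPolynomial (Fin n ⊕ Fin 2) K) (hW : pderiv (Sum.inl i0) W = 0) :
    X (Sum.inl i0) * pderiv (Sum.inl i0) (PPx K f * W)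
      = C (f i0 : K) * (PPx K f * W) := by
  have hsplit : PPx K f = X (Sum.inl i0) ^ f i0 *
      ∏ j ∈ Finset.univ.erase i0, (X (Sum.inl j) : MvPolynomial (Fin n ⊕ Fin 2) K) ^ f j :=
    (Finset.mul_prod_erase Finset.univ _ (Finset.mem_univ i0)).symm
  have hW2 : pderiv (Sum.inl i0)
      ((∏ j ∈ Finset.univ.erase i0,
        (X (Sum.inl j) : MvPolynomial (Fin n ⊕ Fin 2) K) ^ f j) * W) = 0 := by
    rw [pderiv_mul, hW, mul_zero, add_zero,
      pd_PPx_s_zero _ _ _ (fun j hj h => (Finset.mem_erase.mp hj).1 (Sum.inl_injective h.symm)),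
      zero_mul]
  rw [hsplit, mul_assoc, X_mul_pd_mul _ _ _ hW2]

/-- the core factor `H = y^u z^t (x^a y^α + x^b z^β)` -/
noncomputable def Hpoly (K : Type*) [CommSemiring K] {n : ℕ} (a b : Fin n → ℕ)
    (α β u t : ℕ) : MvPolynomial (Fin n ⊕ Fin 2) K :=
  X (Sum.inr 0) ^ u * X (Sum.inr 1) ^ t *
    (PPx K a * X (Sum.inr 0) ^ α + PPx K b * X (Sum.inr 1) ^ β)

/-- `P0 = x^a y^(u+α) z^t` -/
noncomputable def P0 (K : Type*) [CommSemiring K] {n : ℕ} (a : Fin n → ℕ)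
    (α u t : ℕ) : MvPolynomial (Fin n ⊕ Fin 2) K :=
  PPx K a * (X (Sum.inr 0) ^ (u + α) * X (Sum.inr 1) ^ t)

/-- `Q0 = x^b y^u z^(t+β)` -/
noncomputable def Q0 (K : Type*) [CommSemiring K] {n : ℕ} (b : Fin n → ℕ)
    (β u t : ℕ) : MvPolynomial (Fin n ⊕ Fin 2) K :=
  PPx K b * (X (Sum.inr 0) ^ u * X (Sum.inr 1) ^ (t + β))

lemma hsplitH (a b : Fin n → ℕ) (α β u t : ℕ) :
    Hpoly K a b α β u t = P0 K a α u t + Q0 K b β u t := by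
  simp only [Hpoly, P0, Q0, pow_add]
  ring

lemma hXH (a b : Fin n → ℕ) (α β u t : ℕ) (i0 : Fin n) :
    X (Sum.inl i0) * pderiv (Sum.inl i0) (Hpoly K a b α β u t)
      = C (a i0 : K) * P0 K a α u t + C (b i0 : K) * Q0 K b β u t := by
  have w1 : pderiv (Sum.inl i0)
      ((X (Sum.inr 0) : MvPolynomial (Fin n ⊕ Fin 2) K) ^ (u + α) * X (Sum.inr 1) ^ t) = 0 := by
    rw [pderiv_mul, pd_pow_ne (by simp), pd_pow_ne (by simp), zero_mul, mul_zero, add_zero]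
  have w2 : pderiv (Sum.inl i0)
      ((X (Sum.inr 0) : MvPolynomial (Fin n ⊕ Fin 2) K) ^ u * X (Sum.inr 1) ^ (t + β)) = 0 := by
    rw [pderiv_mul, pd_pow_ne (by simp), pd_pow_ne (by simp), zero_mul, mul_zero, add_zero]
  rw [hsplitH, map_add, mul_add]
  simp only [P0, Q0]
  rw [X_mul_pd_PPx_mul a i0 _ w1, X_mul_pd_PPx_mul b i0 _ w2]

lemma hYH (a b : Fin n → ℕ) (α β u t : ℕ) :
    X (Sum.inr 0) * pderiv (Sum.inr 0) (Hpoly K a b α β u t)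
      = C (u : K) * Hpoly K a b α β u t + C (α : K) * P0 K a α u t := by
  have w1 : pderiv (Sum.inr (0 : Fin 2))
      (PPx K a * (X (Sum.inr 1) : MvPolynomial (Fin n ⊕ Fin 2) K) ^ t) = 0 := by
    rw [pderiv_mul, pd_PPx_inr, pd_pow_ne (by simp), zero_mul, mul_zero, add_zero]
  have w2 : pderiv (Sum.inr (0 : Fin 2))
      (PPx K b * (X (Sum.inr 1) : MvPolynomial (Fin n ⊕ Fin 2) K) ^ (t + β)) = 0 := by
    rw [pderiv_mul, pd_PPx_inr, pd_pow_ne (by simp), zero_mul, mul_zero, add_zero]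
  have e : Hpoly K a b α β u t
      = (X (Sum.inr 0) : MvPolynomial (Fin n ⊕ Fin 2) K) ^ (u + α) *
          (PPx K a * X (Sum.inr 1) ^ t)
        + X (Sum.inr 0) ^ u * (PPx K b * X (Sum.inr 1) ^ (t + β)) := by
    simp only [Hpoly, pow_add]
    ring
  rw [e, map_add, mul_add, X_mul_pd_mul _ _ _ w1, X_mul_pd_mul _ _ _ w2, ← e]
  simp only [P0]
  push_cast
  rw [hsplitH]
  simp only [P0, Q0, pow_add, C_add]
  ring

lemma hZH (a b : Fin n → ℕ) (α β u t : ℕ) :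
    X (Sum.inr 1) * pderiv (Sum.inr 1) (Hpoly K a b α β u t)
      = C (t : K) * Hpoly K a b α β u t + C (β : K) * Q0 K b β u t := by
  have w1 : pderiv (Sum.inr (1 : Fin 2))
      (PPx K a * (X (Sum.inr 0) : MvPolynomial (Fin n ⊕ Fin 2) K) ^ (u + α)) = 0 := by
    rw [pderiv_mul, pd_PPx_inr, pd_pow_ne (by simp), zero_mul, mul_zero, add_zero]
  have w2 : pderiv (Sum.inr (1 : Fin 2))
      (PPx K b * (X (Sum.inr 0) : MvPolynomial (Fin n ⊕ Fin 2) K) ^ u) = 0 := by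
    rw [pderiv_mul, pd_PPx_inr, pd_pow_ne (by simp), zero_mul, mul_zero, add_zero]
  have e : Hpoly K a b α β u t
      = (X (Sum.inr 1) : MvPolynomial (Fin n ⊕ Fin 2) K) ^ t *
          (PPx K a * X (Sum.inr 0) ^ (u + α))
        + X (Sum.inr 1) ^ (t + β) * (PPx K b * X (Sum.inr 0) ^ u) := by
    simp only [Hpoly, pow_add]
    ring
  rw [e, map_add, mul_add, X_mul_pd_mul _ _ _ w1, X_mul_pd_mul _ _ _ w2, ← e]
  simp only [Q0]
  push_cast
  rw [hsplitH]
  simp only [P0, Q0, pow_add, C_add]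
  ring

end Stmt14Aux

/-- the binomial
`F = x_1⋯x_n · y^u · z^t · (x^a y^α + x^b z^β)` with `min(a_i,b_i) = 0`,
`α, β > 0`, `u, t ∈ {0,1}`, reduced, is a free divisor. Here the `x`-variables
are indexed by `Sum.inl`, and `y = X (Sum.inr 0)`, `z = X (Sum.inr 1)`. -/
theorem stmt_14 {K : Type*} [Field K] [CharZero K] {n : ℕ}
    (a b : Fin n → ℕ) (hab : ∀ i, min (a i) (b i) = 0)
    (α β : ℕ) (hα : 0 < α) (hβ : 0 < β)
    (u t : ℕ) (hu : u ≤ 1) (ht : t ≤ 1)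
    (F : MvPolynomial (Fin n ⊕ Fin 2) K)
    (hF : F = (∏ i : Fin n, X (Sum.inl i)) * X (Sum.inr 0) ^ u *
        X (Sum.inr 1) ^ t *
        ((∏ i : Fin n, X (Sum.inl i) ^ a i) * X (Sum.inr 0) ^ α +
         (∏ i : Fin n, X (Sum.inl i) ^ b i) * X (Sum.inr 1) ^ β))
    (hred : Squarefree F) :
    ∃ A : Matrix (Fin n ⊕ Fin 2) (Fin n ⊕ Fin 2)
        (MvPolynomial (Fin n ⊕ Fin 2) K),
      A.det = F ∧ ∀ j, (∑ i, pderiv i F * A i j) ∈ Ideal.span {F} := by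
  classical
  set c : K := (α : K) ^ n * ((α : K) * β + (α : K) * t + (β : K) * u) with hc
  have hαK : (α : K) ≠ 0 := Nat.cast_ne_zero.2 hα.ne'
  have hc0 : c ≠ 0 := by
    have hcast : ((α * β + α * t + β * u : ℕ) : K)
        = (α : K) * β + (α : K) * t + (β : K) * u := by push_cast; ring
    have hpos : 0 < α * β + α * t + β * u := by
      have := Nat.mul_pos hα hβ; omega
    rw [hc]
    exact mul_ne_zero (pow_ne_zero _ hαK)
      (by rw [← hcast]; exact Nat.cast_ne_zero.2 hpos.ne')
  have hFH : F = PPx K (fun _ => 1) * Hpoly K a b α β u t := by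
    rw [hF]
    simp only [PPx, Hpoly, pow_one]
    ring
  have hsplitF : F = PPx K (fun _ => 1) * P0 K a α u t
      + PPx K (fun _ => 1) * Q0 K b β u t := by
    rw [hFH, hsplitH (K := K) a b α β u t, mul_add]
  have hFy : pderiv (Sum.inr (0 : Fin 2)) F
      = PPx K (fun _ => 1) * pderiv (Sum.inr 0) (Hpoly K a b α β u t) := by
    rw [hFH, pderiv_mul, pd_PPx_inr, zero_mul, zero_add]
  have hFz : pderiv (Sum.inr (1 : Fin 2)) F
      = PPx K (fun _ => 1) * pderiv (Sum.inr 1) (Hpoly K a b α β u t) := by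
    rw [hFH, pderiv_mul, pd_PPx_inr, zero_mul, zero_add]
  have hYF : X (Sum.inr 0) * pderiv (Sum.inr (0 : Fin 2)) F
      = C (u : K) * F + C (α : K) * (PPx K (fun _ => 1) * P0 K a α u t) := by
    rw [hFy, hFH]
    linear_combination (PPx K (fun _ => 1)) * hYH (K := K) a b α β u t
  have hZF : X (Sum.inr 1) * pderiv (Sum.inr (1 : Fin 2)) F
      = C (t : K) * F + C (β : K) * (PPx K (fun _ => 1) * Q0 K b β u t) := by
    rw [hFz, hFH]
    linear_combination (PPx K (fun _ => 1)) * hZH (K := K) a b α β u t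
  have hXF : ∀ i0 : Fin n, X (Sum.inl i0) * pderiv (Sum.inl i0) F
      = F + C (a i0 : K) * (PPx K (fun _ => 1) * P0 K a α u t)
          + C (b i0 : K) * (PPx K (fun _ => 1) * Q0 K b β u t) := by
    intro i0
    have h1 : X (Sum.inl i0) * pderiv (Sum.inl i0) (PPx K (fun _ => 1))
        = PPx K (fun _ => 1) := by
      have := X_mul_pd_PPx_mul (K := K) (fun _ => (1 : ℕ)) i0 1 (by simp)
      simpa using this
    have h2 := hXH (K := K) a b α β u t i0
    rw [hFH, pderiv_mul]
    linear_combination (Hpoly K a b α β u t) * h1 + (PPx K (fun _ => 1)) * h2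
  refine ⟨Matrix.fromBlocks
      (Matrix.diagonal fun i => C (α : K) * X (Sum.inl i))
      0
      (Matrix.of fun p i => if p = 0 then
        (C (b i : K) - C (a i : K)) * X (Sum.inr 0) else 0)
      !![C c⁻¹ * pderiv (Sum.inr 1) (Hpoly K a b α β u t), C (β : K) * X (Sum.inr 0);
         -(C c⁻¹ * pderiv (Sum.inr 0) (Hpoly K a b α β u t)), C (α : K) * X (Sum.inr 1)],
      ?_, ?_⟩
  · -- determinant
    rw [Matrix.det_fromBlocks_zero₁₂, Matrix.det_diagonal, Matrix.det_fin_two_of]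
    have hprod : (∏ i : Fin n, (C (α : K) * X (Sum.inl i)
          : MvPolynomial (Fin n ⊕ Fin 2) K))
        = C ((α : K) ^ n) * PPx K (fun _ => 1) := by
      rw [Finset.prod_mul_distrib, Finset.prod_const, map_pow]
      simp [PPx, Finset.card_univ]
    have hdet2 : C (α : K) * (X (Sum.inr 1) * pderiv (Sum.inr 1) (Hpoly K a b α β u t))
        + C (β : K) * (X (Sum.inr 0) * pderiv (Sum.inr 0) (Hpoly K a b α β u t))
        = (C (α : K) * C (t : K) + C (β : K) * C (u : K) + C (α : K) * C (β : K)) *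
            Hpoly K a b α β u t := by
      linear_combination (C (α : K)) * hZH (K := K) a b α β u t
        + (C (β : K)) * hYH (K := K) a b α β u t
        - (C (α : K) * C (β : K)) * hsplitH (K := K) a b α β u t
    have hscal : (C ((α : K) ^ n) : MvPolynomial (Fin n ⊕ Fin 2) K) * C c⁻¹ *
        (C (α : K) * C (t : K) + C (β : K) * C (u : K) + C (α : K) * C (β : K)) = 1 := by
      have key : (α : K) ^ n * c⁻¹ * ((α : K) * t + (β : K) * u + (α : K) * β) = 1 := by
        have hs : (α : K) * β + (α : K) * t + (β : K) * u ≠ 0 := by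
          rw [hc] at hc0; exact right_ne_zero_of_mul hc0
        have hs2 : (α : K) * t + (α : K) * β + (β : K) * u ≠ 0 := by
          intro h; apply hs; linear_combination h
        rw [hc, show (α : K) * t + (β : K) * u + (α : K) * β
            = (α : K) * β + (α : K) * t + (β : K) * u by ring, mul_inv,
          mul_inv_cancel_left₀ (pow_ne_zero n hαK), inv_mul_cancel₀ hs]
      simp only [← C_mul, ← C_add]
      rw [key, map_one]
    rw [hprod, hFH]
    linear_combination (C ((α : K) ^ n) * C c⁻¹ * PPx K (fun _ => 1)) * hdet2
      + (PPx K (fun _ => 1) * Hpoly K a b α β u t) * hscal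
  · -- column relations
    intro j
    rw [Ideal.mem_span_singleton]
    rcases j with i0 | p
    · -- x-columns
      have hsum : (∑ i, pderiv i F * Matrix.fromBlocks
            (Matrix.diagonal fun i => C (α : K) * X (Sum.inl i)) 0
            (Matrix.of fun p i => if p = 0 then
              (C (b i : K) - C (a i : K)) * X (Sum.inr 0) else 0)
            !![C c⁻¹ * pderiv (Sum.inr 1) (Hpoly K a b α β u t), C (β : K) * X (Sum.inr 0);
               -(C c⁻¹ * pderiv (Sum.inr 0) (Hpoly K a b α β u t)), C (α : K) * X (Sum.inr 1)]
            i (Sum.inl i0))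
          = pderiv (Sum.inl i0) F * (C (α : K) * X (Sum.inl i0))
            + pderiv (Sum.inr (0 : Fin 2)) F *
              ((C (b i0 : K) - C (a i0 : K)) * X (Sum.inr 0)) := by
        rw [Fintype.sum_sum_type, Fin.sum_univ_two]
        simp [Matrix.fromBlocks_apply₁₁, Matrix.fromBlocks_apply₂₁, Matrix.diagonal_apply,
          Matrix.of_apply, mul_ite, mul_zero, Finset.sum_ite_eq', Finset.mem_univ]
      rw [hsum]
      refine ⟨C (α : K) + (C (b i0 : K) - C (a i0 : K)) * C (u : K)
        + C (α : K) * C (b i0 : K), ?_⟩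
      linear_combination (C (α : K)) * hXF i0
        + (C (b i0 : K) - C (a i0 : K)) * hYF
        - (C (α : K) * C (b i0 : K)) * hsplitF
    · -- y,z-columns
      have hsum : ∀ q : Fin 2, (∑ i, pderiv i F * Matrix.fromBlocks
            (Matrix.diagonal fun i => C (α : K) * X (Sum.inl i)) 0
            (Matrix.of fun p i => if p = 0 then
              (C (b i : K) - C (a i : K)) * X (Sum.inr 0) else 0)
            !![C c⁻¹ * pderiv (Sum.inr 1) (Hpoly K a b α β u t), C (β : K) * X (Sum.inr 0);
               -(C c⁻¹ * pderiv (Sum.inr 0) (Hpoly K a b α β u t)), C (α : K) * X (Sum.inr 1)]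
            i (Sum.inr q))
          = pderiv (Sum.inr (0 : Fin 2)) F *
              (!![C c⁻¹ * pderiv (Sum.inr 1) (Hpoly K a b α β u t), C (β : K) * X (Sum.inr 0);
               -(C c⁻¹ * pderiv (Sum.inr 0) (Hpoly K a b α β u t)), C (α : K) * X (Sum.inr 1)]
               0 q)
            + pderiv (Sum.inr (1 : Fin 2)) F *
              (!![C c⁻¹ * pderiv (Sum.inr 1) (Hpoly K a b α β u t), C (β : K) * X (Sum.inr 0);
               -(C c⁻¹ * pderiv (Sum.inr 0) (Hpoly K a b α β u t)), C (α : K) * X (Sum.inr 1)]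
               1 q) := by
        intro q
        rw [Fintype.sum_sum_type, Fin.sum_univ_two]
        simp [Matrix.fromBlocks_apply₁₂, Matrix.fromBlocks_apply₂₂]
      have hp : p = 0 ∨ p = 1 := by omega
      rcases hp with rfl | rfl
      · -- syzygy column
        rw [hsum 0]
        refine ⟨0, ?_⟩
        simp only [Matrix.of_apply, Matrix.cons_val', Matrix.cons_val_zero,
          Matrix.cons_val_one, Matrix.head_cons, Matrix.head_fin_const,
          Matrix.empty_val', Matrix.cons_val_fin_one]
        rw [hFy, hFz]
        ring
      · -- z-column
        rw [hsum 1]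
        refine ⟨C (β : K) * C (u : K) + C (α : K) * C (t : K)
          + C (α : K) * C (β : K), ?_⟩
        simp only [Matrix.of_apply, Matrix.cons_val', Matrix.cons_val_zero,
          Matrix.cons_val_one, Matrix.head_cons, Matrix.head_fin_const,
          Matrix.empty_val', Matrix.cons_val_fin_one]
        linear_combination (C (β : K)) * hYF + (C (α : K)) * hZF
          - (C (α : K) * C (β : K)) * hsplitF
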